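/- For every integer k ≥ 5 with k ≡ 2 (mod 3), there exists a constant c (depending only on k) such that for every n, C_k(n) ≤ c · n² · u(n)^{(k−2)/3}. -/

import Mathlib

/-- The number of `k`-chains spanned by a finite point set `P` in `ℝ^d` with respect to a
sequence of distances `δ : Fin k → ℝ`: tuples `(p 0, …, p k)` of pairwise distinct points of
`P` with `dist (p j) (p (j+1)) = δ j` for all `j`. -/
noncomputable def chainCount (d k : ℕ) (P : Finset (EuclideanSpace ℝ (Fin d)))
    (δ : Fin k → ℝ) : ℕ :=
  Set.ncard {p : Fin (k + 1) → EuclideanSpace ℝ (Fin d) |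
    (∀ i, p i ∈ P) ∧ Function.Injective p ∧
    ∀ j : Fin k, dist (p j.castSucc) (p j.succ) = δ j}

/-- `maxChains d k n` is the maximum number of `k`-chains spanned by a set of `n` points in
`ℝ^d`, over all sequences of positive distances. -/
noncomputable def maxChains (d k n : ℕ) : ℕ :=
  sSup {m | ∃ (P : Finset (EuclideanSpace ℝ (Fin d))) (δ : Fin k → ℝ),
    P.card = n ∧ (∀ j, 0 < δ j) ∧ m = chainCount d k P δ}

/-- `maxUnitDist d n` is the maximum, over all `n`-point sets `P ⊆ ℝ^d` and all `δ > 0`, of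
the number of ordered pairs of points of `P` at distance `δ`. -/
noncomputable def maxUnitDist (d n : ℕ) : ℕ :=
  sSup {m | ∃ (P : Finset (EuclideanSpace ℝ (Fin d))) (δ : ℝ),
    P.card = n ∧ 0 < δ ∧
    m = Set.ncard {pq : EuclideanSpace ℝ (Fin d) × EuclideanSpace ℝ (Fin d) |
      pq.1 ∈ P ∧ pq.2 ∈ P ∧ dist pq.1 pq.2 = δ}}

local notation "E2" => EuclideanSpace ℝ (Fin 2)

lemma circles_subset_pair {c₁ c₂ : E2} (hc : c₁ ≠ c₂) (r₁ r₂ : ℝ) :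
    ∃ u v : E2, {x : E2 | dist x c₁ = r₁ ∧ dist x c₂ = r₂} ⊆ {u, v} := by
  set S : Set E2 := {x : E2 | dist x c₁ = r₁ ∧ dist x c₂ = r₂} with hS
  by_cases h : ∃ u ∈ S, ∃ v ∈ S, u ≠ v
  · obtain ⟨u, hu, v, hv, huv⟩ := h
    refine ⟨u, v, fun x hx => ?_⟩
    have := EuclideanGeometry.eq_of_dist_eq_of_dist_eq_of_finrank_eq_two
      (finrank_euclideanSpace_fin) hc huv hu.1 hv.1 hx.1 hu.2 hv.2 hx.2
    simpa using this
  · push_neg at h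
    rcases S.eq_empty_or_nonempty with he | ⟨u, hu⟩
    · exact ⟨0, 0, by rw [he]; exact Set.empty_subset _⟩
    · exact ⟨u, u, fun x hx => by simp [h x hx u hu]⟩

lemma chainCount_le (e : ℕ) (P : Finset E2) (δ : Fin (3*e+2) → ℝ) (U : ℕ)
    (hU : ∀ j : Fin (3*e+2),
      Set.ncard {pq : E2 × E2 | pq.1 ∈ P ∧ pq.2 ∈ P ∧ dist pq.1 pq.2 = δ j} ≤ U) :
    chainCount 2 (3*e+2) P δ ≤ 2^(e+1) * (P.card^2 * U^e) := by
  classical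
  set S : Set (Fin (3*e+2+1) → E2) := {p | (∀ i, p i ∈ P) ∧ Function.Injective p ∧
    ∀ j : Fin (3*e+2), dist (p j.castSucc) (p j.succ) = δ j} with hSdef
  have hfin : S.Finite := by
    apply Set.Finite.subset (Set.Finite.pi (fun _ : Fin (3*e+2+1) => P.finite_toSet))
    intro p hp
    simp only [Set.mem_pi, Set.mem_univ, forall_true_left]
    exact fun i => hp.1 i
  set F := hfin.toFinset with hF
  have hcc : chainCount 2 (3*e+2) P δ = F.card := by
    rw [chainCount, ← Set.ncard_coe_finset, Set.Finite.coe_toFinset]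
  set Φ : (Fin (3*e+2+1) → E2) → E2 × E2 × (Fin e → E2 × E2) :=
    fun p => (p 0, p ⟨3*e+2, by omega⟩,
      fun i => (p ⟨3*(i:ℕ)+2, by have := i.isLt; omega⟩,
                p ⟨3*(i:ℕ)+3, by have := i.isLt; omega⟩)) with hΦ
  -- classification of indices
  have key : ∀ m : Fin (3*e+2+1), (m : ℕ) = 0 ∨ (m:ℕ) = 3*e+2 ∨
      (∃ i : Fin e, (m:ℕ) = 3*(i:ℕ)+2) ∨ (∃ i : Fin e, (m:ℕ) = 3*(i:ℕ)+3) ∨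
      (∃ i : Fin (e+1), (m:ℕ) = 3*(i:ℕ)+1) := by
    intro m
    have hm := m.isLt
    have h3 : (m:ℕ) % 3 = 0 ∨ (m:ℕ)%3 = 1 ∨ (m:ℕ)%3 = 2 := by omega
    obtain h|h|h := h3
    · rcases Nat.eq_zero_or_pos (m:ℕ) with h0|h0
      · exact Or.inl h0
      · refine Or.inr (Or.inr (Or.inr (Or.inl ⟨⟨(m:ℕ)/3 - 1, by omega⟩, ?_⟩)))
        show (m:ℕ) = 3*((m:ℕ)/3 - 1)+3
        omega
    · refine Or.inr (Or.inr (Or.inr (Or.inr ⟨⟨(m:ℕ)/3, by omega⟩, ?_⟩)))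
      show (m:ℕ) = 3*((m:ℕ)/3)+1
      omega
    · rcases Nat.lt_or_ge ((m:ℕ)/3) e with he'|he'
      · refine Or.inr (Or.inr (Or.inl ⟨⟨(m:ℕ)/3, he'⟩, ?_⟩))
        show (m:ℕ) = 3*((m:ℕ)/3)+2
        omega
      · exact Or.inr (Or.inl (by omega))
  -- points with index ≢ 1 mod 3 are determined by Φ
  have comp_eq : ∀ p q : Fin (3*e+2+1) → E2, Φ p = Φ q →
      ∀ m : Fin (3*e+2+1), (m:ℕ) % 3 = 0 ∨ (m:ℕ) % 3 = 2 → p m = q m := by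
    intro p q hpq m hm
    have h1 : p 0 = q 0 := congrArg Prod.fst hpq
    have h2 : p ⟨3*e+2, by omega⟩ = q ⟨3*e+2, by omega⟩ :=
      congrArg (fun x => x.2.1) hpq
    have h3 : ∀ i : Fin e,
        p ⟨3*(i:ℕ)+2, by have := i.isLt; omega⟩ = q ⟨3*(i:ℕ)+2, by have := i.isLt; omega⟩ ∧
        p ⟨3*(i:ℕ)+3, by have := i.isLt; omega⟩ = q ⟨3*(i:ℕ)+3, by have := i.isLt; omega⟩ := by
      intro i
      have := congrFun (congrArg (fun x => x.2.2) hpq) i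
      exact ⟨congrArg Prod.fst this, congrArg Prod.snd this⟩
    rcases key m with h|h|⟨i,h⟩|⟨i,h⟩|⟨i,h⟩
    · have : m = 0 := Fin.ext (by simpa using h)
      rw [this]; exact h1
    · have : m = ⟨3*e+2, by omega⟩ := Fin.ext h
      rw [this]; exact h2
    · have : m = ⟨3*(i:ℕ)+2, by have := i.isLt; omega⟩ := Fin.ext h
      rw [this]; exact (h3 i).1
    · have : m = ⟨3*(i:ℕ)+3, by have := i.isLt; omega⟩ := Fin.ext h
      rw [this]; exact (h3 i).2
    · omega
  have mem_S : ∀ p, p ∈ F → p ∈ S := fun p hp => (Set.Finite.mem_toFinset hfin).1 hp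
  -- fiber bound
  have fiber_bound : ∀ b ∈ F.image Φ, (F.filter (fun p => Φ p = b)).card ≤ 2^(e+1) := by
    intro b hb
    rcases (F.filter (fun p => Φ p = b)).eq_empty_or_nonempty with h0|⟨p₀, hp₀⟩
    · simp [h0]
    · rw [Finset.mem_filter] at hp₀
      obtain ⟨hp₀F, hp₀b⟩ := hp₀
      obtain ⟨hmem, hinj, hdist⟩ := mem_S p₀ hp₀F
      have hcd : ∀ i : Fin (e+1),
          (p₀ ⟨3*(i:ℕ), by have := i.isLt; omega⟩ : E2) ≠
            p₀ ⟨3*(i:ℕ)+2, by have := i.isLt; omega⟩ := by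
        intro i h
        have := hinj h
        have : 3*(i:ℕ) = 3*(i:ℕ)+2 := congrArg Fin.val this
        omega
      choose u v hUV using fun i : Fin (e+1) =>
        circles_subset_pair (hcd i) (δ ⟨3*(i:ℕ), by have := i.isLt; omega⟩)
          (δ ⟨3*(i:ℕ)+1, by have := i.isLt; omega⟩)
      set T : Fin (e+1) → Finset E2 := fun i => {u i, v i} with hT
      have hψ : (F.filter (fun p => Φ p = b)).card ≤ (Fintype.piFinset T).card := by
        apply Finset.card_le_card_of_injOn
          (fun p => fun i : Fin (e+1) => p ⟨3*(i:ℕ)+1, by have := i.isLt; omega⟩)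
        · intro p hp
          rw [Finset.mem_coe, Finset.mem_filter] at hp
          obtain ⟨hpF, hpb⟩ := hp
          obtain ⟨hm', hinj', hdist'⟩ := mem_S p hpF
          have hΦeq : Φ p = Φ p₀ := hpb.trans hp₀b.symm
          rw [Finset.mem_coe, Fintype.mem_piFinset]
          intro i
          have hil := i.isLt
          have e1 : p ⟨3*(i:ℕ), by omega⟩ = p₀ ⟨3*(i:ℕ), by omega⟩ :=
            comp_eq p p₀ hΦeq _ (Or.inl (show (3*(i:ℕ))%3 = 0 by omega))
          have e2 : p ⟨3*(i:ℕ)+2, by omega⟩ = p₀ ⟨3*(i:ℕ)+2, by omega⟩ :=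
            comp_eq p p₀ hΦeq _ (Or.inr (show (3*(i:ℕ)+2)%3 = 2 by omega))
          have d1 : dist (p ⟨3*(i:ℕ)+1, by omega⟩) (p₀ ⟨3*(i:ℕ), by omega⟩)
              = δ ⟨3*(i:ℕ), by omega⟩ := by
            rw [← e1, dist_comm]
            have := hdist' ⟨3*(i:ℕ), by omega⟩
            simpa only [Fin.castSucc_mk, Fin.succ_mk] using this
          have d2 : dist (p ⟨3*(i:ℕ)+1, by omega⟩) (p₀ ⟨3*(i:ℕ)+2, by omega⟩)
              = δ ⟨3*(i:ℕ)+1, by omega⟩ := by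
            rw [← e2]
            have := hdist' ⟨3*(i:ℕ)+1, by omega⟩
            simpa only [Fin.castSucc_mk, Fin.succ_mk] using this
          have := hUV i ⟨d1, d2⟩
          simpa [hT] using this
        · intro p hp q hq hpq
          simp only [Finset.coe_filter, Set.mem_setOf_eq] at hp hq
          have hΦeq : Φ p = Φ q := hp.2.trans hq.2.symm
          funext m
          rcases key m with h|h|⟨i,h⟩|⟨i,h⟩|⟨i,h⟩
          · exact comp_eq p q hΦeq m (Or.inl (by omega))
          · exact comp_eq p q hΦeq m (Or.inr (by omega))
          · exact comp_eq p q hΦeq m (Or.inr (by omega))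
          · exact comp_eq p q hΦeq m (Or.inl (by omega))
          · have hmi : m = ⟨3*(i:ℕ)+1, by have := i.isLt; omega⟩ := Fin.ext h
            rw [hmi]
            exact congrFun hpq i
      calc (F.filter (fun p => Φ p = b)).card ≤ (Fintype.piFinset T).card := hψ
        _ = ∏ i : Fin (e+1), (T i).card := Fintype.card_piFinset T
        _ ≤ ∏ _i : Fin (e+1), 2 := by
            apply Finset.prod_le_prod'
            intro i _
            exact (Finset.card_insert_le _ _).trans (by simp)
        _ = 2^(e+1) := by simp [Finset.prod_const]
  -- image bound
  have hcardD : ∀ j : Fin (3*e+2),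
      ((P ×ˢ P).filter (fun q : E2 × E2 => dist q.1 q.2 = δ j)).card ≤ U := by
    intro j
    have hset : (((P ×ˢ P).filter (fun q : E2 × E2 => dist q.1 q.2 = δ j)) : Set (E2 × E2))
        = {pq : E2 × E2 | pq.1 ∈ P ∧ pq.2 ∈ P ∧ dist pq.1 pq.2 = δ j} := by
      ext q
      simp [Finset.mem_filter, Finset.mem_product, and_assoc]
    rw [← Set.ncard_coe_finset, hset]
    exact hU j
  have image_bound : (F.image Φ).card ≤ P.card^2 * U^e := by
    have hsub : F.image Φ ⊆ P ×ˢ (P ×ˢ Fintype.piFinset (fun i : Fin e =>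
        (P ×ˢ P).filter (fun q : E2 × E2 =>
          dist q.1 q.2 = δ ⟨3*(i:ℕ)+2, by have := i.isLt; omega⟩))) := by
      intro b hb
      rw [Finset.mem_image] at hb
      obtain ⟨p, hpF, rfl⟩ := hb
      obtain ⟨hm, hinj, hd⟩ := mem_S p hpF
      rw [Finset.mem_product]
      refine ⟨hm 0, ?_⟩
      rw [Finset.mem_product]
      refine ⟨hm _, ?_⟩
      rw [Fintype.mem_piFinset]
      intro i
      rw [Finset.mem_filter, Finset.mem_product]
      refine ⟨⟨hm _, hm _⟩, ?_⟩
      have := hd ⟨3*(i:ℕ)+2, by have := i.isLt; omega⟩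
      simpa only [Fin.castSucc_mk, Fin.succ_mk] using this
    calc (F.image Φ).card ≤ _ := Finset.card_le_card hsub
      _ = P.card * (P.card * ∏ i : Fin e, ((P ×ˢ P).filter (fun q : E2 × E2 =>
            dist q.1 q.2 = δ ⟨3*(i:ℕ)+2, by have := i.isLt; omega⟩)).card) := by
          rw [Finset.card_product, Finset.card_product, Fintype.card_piFinset]
      _ ≤ P.card * (P.card * ∏ _i : Fin e, U) := by
          gcongr with i _
          exact hcardD _
      _ = P.card^2 * U^e := by
          simp [Finset.prod_const]
          ring
  calc chainCount 2 (3*e+2) P δ = F.card := hcc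
    _ ≤ 2^(e+1) * (F.image Φ).card := Finset.card_le_mul_card_image F _ fiber_bound
    _ ≤ 2^(e+1) * (P.card^2 * U^e) := Nat.mul_le_mul_left _ image_bound

theorem chains_vs_unit_distances_mod3_eq_2 (k : ℕ) (hk : 5 ≤ k) (hmod : k % 3 = 2) :
    ∃ c : ℝ, 0 < c ∧ ∀ n : ℕ,
      (maxChains 2 k n : ℝ) ≤ c * (n : ℝ) ^ 2 * (maxUnitDist 2 n : ℝ) ^ ((k - 2) / 3) := by
  obtain ⟨e, rfl⟩ : ∃ e, k = 3*e+2 := ⟨(k-2)/3, by omega⟩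
  refine ⟨2^(e+1), by positivity, fun n => ?_⟩
  have hexp : (3*e+2-2)/3 = e := by omega
  rw [hexp]
  -- every pair count with an n-point set is at most n^2
  have pair_bound : ∀ (P' : Finset E2) (δ' : ℝ),
      Set.ncard {pq : E2 × E2 | pq.1 ∈ P' ∧ pq.2 ∈ P' ∧ dist pq.1 pq.2 = δ'}
        ≤ P'.card^2 := by
    intro P' δ'
    have hsub : {pq : E2 × E2 | pq.1 ∈ P' ∧ pq.2 ∈ P' ∧ dist pq.1 pq.2 = δ'}
        ⊆ ((P' ×ˢ P' : Finset (E2 × E2)) : Set (E2 × E2)) := by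
      intro q hq
      simp only [Finset.coe_product, Set.mem_prod]
      exact ⟨hq.1, hq.2.1⟩
    calc Set.ncard _ ≤ ((P' ×ˢ P' : Finset (E2 × E2)) : Set (E2 × E2)).ncard :=
          Set.ncard_le_ncard hsub (Finset.finite_toSet _)
      _ = (P' ×ˢ P').card := Set.ncard_coe_finset _
      _ = P'.card^2 := by rw [Finset.card_product]; ring
  have hbddU : BddAbove {m | ∃ (P : Finset E2) (δ : ℝ),
      P.card = n ∧ 0 < δ ∧
      m = Set.ncard {pq : E2 × E2 | pq.1 ∈ P ∧ pq.2 ∈ P ∧ dist pq.1 pq.2 = δ}} := by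
    refine ⟨n^2, fun m hm => ?_⟩
    obtain ⟨P', δ', hc, _, rfl⟩ := hm
    simpa [hc] using pair_bound P' δ'
  have hnat : maxChains 2 (3*e+2) n ≤ 2^(e+1) * (n^2 * (maxUnitDist 2 n)^e) := by
    rw [maxChains]
    rcases Set.eq_empty_or_nonempty {m | ∃ (P : Finset E2) (δ : Fin (3*e+2) → ℝ),
        P.card = n ∧ (∀ j, 0 < δ j) ∧ m = chainCount 2 (3*e+2) P δ} with hemp|hne
    · rw [hemp, csSup_empty]
      exact Nat.zero_le _
    · apply csSup_le hne
      rintro m ⟨P, δ, hc, hpos, rfl⟩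
      have hU : ∀ j : Fin (3*e+2),
          Set.ncard {pq : E2 × E2 | pq.1 ∈ P ∧ pq.2 ∈ P ∧ dist pq.1 pq.2 = δ j}
            ≤ maxUnitDist 2 n := by
        intro j
        exact le_csSup hbddU ⟨P, δ j, hc, hpos j, rfl⟩
      have := chainCount_le e P δ (maxUnitDist 2 n) hU
      rwa [hc] at this
  calc (maxChains 2 (3*e+2) n : ℝ)
      ≤ ((2^(e+1) * (n^2 * (maxUnitDist 2 n)^e) : ℕ) : ℝ) := by exact_mod_cast hnat
    _ = 2^(e+1) * (n:ℝ)^2 * (maxUnitDist 2 n : ℝ)^e := by push_cast; ring
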